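/- arXiv:1704.02816 — 2 statements merged into one kernel-verified Lean document; each statement's English description precedes it below -/
import Mathlib

section
/- There is a dense G_δ set in the space CC of continuous convex functions on [0,1]^d such that every f in this set satisfies: for every j ∈ {1,…,d} and every choice of the other coordinates in [0,1], ∂_{j,+}f = −∞ at points with x_j = 0 and ∂_{j,−}f = +∞ at points with x_j = 1; consequently h_f(x) = 0 at every such boundary point. -/
open Filter Set
open scoped ENNReal NNReal

/-- A continuous map `f` on the cube `[0,1]^d` is convex. -/
def IsConvexMapOnCube {d : ℕ} (f : C(Set.Icc (0 : Fin d → ℝ) 1, ℝ)) : Prop :=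
  ∀ (x y z : Set.Icc (0 : Fin d → ℝ) 1) (s t : ℝ), 0 ≤ s → 0 ≤ t → s + t = 1 →
    (z : Fin d → ℝ) = s • (x : Fin d → ℝ) + t • (y : Fin d → ℝ) →
    f z ≤ s * f x + t * f y

/-- The space `CC` of continuous convex functions on `[0,1]^d`, with the sup-norm
(metric) topology inherited from `C([0,1]^d, ℝ)`. -/
abbrev CCSpace (d : ℕ) := {f : C(Set.Icc (0 : Fin d → ℝ) 1, ℝ) // IsConvexMapOnCube f}

/-- The pointwise Hölder exponent of `f : ℝ^d → ℝ` at `x`, computed within the set `s`: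
the supremum of all `h ≥ 0` such that there exist a polynomial `P` of (total) degree
strictly less than `h` and a constant `C > 0` with
`|f y - P (y - x)| ≤ C * ‖y - x‖ ^ h` for `y` near `x` (within `s`). -/
noncomputable def mHolderExpOn {d : ℕ} (f : (Fin d → ℝ) → ℝ) (s : Set (Fin d → ℝ))
    (x : Fin d → ℝ) : ℝ≥0∞ :=
  ⨆ (h : ℝ≥0) (_ : ∃ P : MvPolynomial (Fin d) ℝ, (P.totalDegree : ℝ) < (h : ℝ) ∧
      ∃ C > (0:ℝ), ∀ᶠ y in nhdsWithin x s,
        |f y - MvPolynomial.eval (fun i => y i - x i) P| ≤ C * ‖y - x‖ ^ (h : ℝ)),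
    (h : ℝ≥0∞)

namespace CCAux

noncomputable def clamp (u : ℝ) : ℝ := max 0 (min 1 u)

lemma clamp_mem (u : ℝ) : clamp u ∈ Icc (0:ℝ) 1 := by
  constructor
  · exact le_max_left _ _
  · exact max_le (by norm_num) (min_le_left _ _)

lemma clamp_eq {u : ℝ} (h : u ∈ Icc (0:ℝ) 1) : clamp u = u := by
  rcases h with ⟨h0, h1⟩
  unfold clamp
  rw [min_eq_right h1, max_eq_right h0]

variable {d : ℕ}

lemma mem_cube_update (x : ↥(Icc (0:Fin d → ℝ) 1)) (j : Fin d) {u : ℝ} (hu : u ∈ Icc (0:ℝ) 1) :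
    Function.update (x : Fin d → ℝ) j u ∈ Icc (0:Fin d → ℝ) 1 := by
  obtain ⟨hx0, hx1⟩ := x.2
  constructor
  · intro i
    rw [Function.update_apply]
    split
    · exact hu.1
    · exact hx0 i
  · intro i
    rw [Function.update_apply]
    split
    · exact hu.2
    · exact hx1 i

noncomputable def upd (x : ↥(Icc (0:Fin d → ℝ) 1)) (j : Fin d) (u : ℝ) :
    ↥(Icc (0:Fin d → ℝ) 1) :=
  ⟨Function.update (x : Fin d → ℝ) j (clamp u), mem_cube_update x j (clamp_mem u)⟩

lemma upd_val (x : ↥(Icc (0:Fin d → ℝ) 1)) (j : Fin d) {u : ℝ} (hu : u ∈ Icc (0:ℝ) 1) :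
    (upd x j u : Fin d → ℝ) = Function.update (x : Fin d → ℝ) j u := by
  simp [upd, clamp_eq hu]

lemma continuous_upd (j : Fin d) (u : ℝ) : Continuous fun x : ↥(Icc (0:Fin d → ℝ) 1) => upd x j u := by
  apply Continuous.subtype_mk
  apply continuous_pi
  intro i
  simp only [Function.update_apply]
  split
  · exact continuous_const
  · exact (continuous_apply i).comp continuous_subtype_val

def faceVal (b : Bool) : ℝ := if b then 1 else 0

def inn (b : Bool) (t : ℝ) : ℝ := if b then 1 - t else t

lemma inn_mem {b : Bool} {t : ℝ} (h : t ∈ Icc (0:ℝ) 1) : inn b t ∈ Icc (0:ℝ) 1 := by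
  cases b <;> simp [inn] <;> constructor <;> linarith [h.1, h.2]

/-- The open sets. -/
def USet (d : ℕ) (j : Fin d) (b : Bool) (n m : ℕ) : Set (CCSpace d) :=
  {f | ∃ t : ℝ, 0 < t ∧ t < 1/(n+1) ∧ ∀ x : ↥(Icc (0:Fin d → ℝ) 1), (x : Fin d → ℝ) j = faceVal b →
    f.1 (upd x j (inn b t)) - f.1 x < -((n:ℝ)+1) * t ^ ((1:ℝ)/(m+1))}

-- chord / slope monotonicity
lemma chord {f : C(Set.Icc (0 : Fin d → ℝ) 1, ℝ)} (hf : IsConvexMapOnCube f)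
    {x : ↥(Icc (0:Fin d → ℝ) 1)} {j : Fin d} {b : Bool} (hx : (x : Fin d → ℝ) j = faceVal b)
    {t t0 : ℝ} (ht : 0 ≤ t) (htt0 : t ≤ t0) (ht0 : 0 < t0) (ht01 : t0 ≤ 1) :
    f (upd x j (inn b t)) - f x ≤ (t/t0) * (f (upd x j (inn b t0)) - f x) := by
  have ht1 : t ∈ Icc (0:ℝ) 1 := ⟨ht, htt0.trans ht01⟩
  have ht0m : t0 ∈ Icc (0:ℝ) 1 := ⟨ht0.le, ht01⟩
  have hs : (0:ℝ) ≤ 1 - t/t0 := by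
    rw [sub_nonneg]; exact div_le_one_of_le₀ htt0 ht0.le
  have hr : (0:ℝ) ≤ t/t0 := div_nonneg ht ht0.le
  have key := hf x (upd x j (inn b t0)) (upd x j (inn b t)) (1 - t/t0) (t/t0) hs hr (by ring) ?_
  · nlinarith [key]
  · rw [upd_val x j (inn_mem ht1), upd_val x j (inn_mem ht0m)]
    funext i
    by_cases hij : i = j
    · subst hij
      simp only [Function.update_self, Pi.add_apply, Pi.smul_apply, smul_eq_mul, hx]
      cases b <;> simp [inn, faceVal] <;> field_simp <;> ring
    · simp only [Pi.add_apply, Pi.smul_apply, smul_eq_mul, Function.update_of_ne hij]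
      ring

-- closedness of the convexity predicate
lemma isClosed_convex (d : ℕ) :
    IsClosed {f : C(Set.Icc (0 : Fin d → ℝ) 1, ℝ) | IsConvexMapOnCube f} := by
  have hev : ∀ w : Set.Icc (0 : Fin d → ℝ) 1,
      Continuous fun f : C(Set.Icc (0 : Fin d → ℝ) 1, ℝ) => f w :=
    fun w => ContinuousEvalConst.continuous_eval_const w
  have : {f : C(Set.Icc (0 : Fin d → ℝ) 1, ℝ) | IsConvexMapOnCube f} =
      ⋂ (x : Set.Icc (0 : Fin d → ℝ) 1), ⋂ (y : Set.Icc (0 : Fin d → ℝ) 1),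
      ⋂ (z : Set.Icc (0 : Fin d → ℝ) 1), ⋂ (s : ℝ), ⋂ (t : ℝ),
      ⋂ (_ : 0 ≤ s), ⋂ (_ : 0 ≤ t), ⋂ (_ : s + t = 1),
      ⋂ (_ : (z : Fin d → ℝ) = s • (x : Fin d → ℝ) + t • (y : Fin d → ℝ)),
        {f : C(Set.Icc (0 : Fin d → ℝ) 1, ℝ) | f z ≤ s * f x + t * f y} := by
    ext f
    simp only [mem_iInter, mem_setOf_eq]
    rfl
  rw [this]
  refine isClosed_iInter fun x => isClosed_iInter fun y => isClosed_iInter fun z =>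
    isClosed_iInter fun s => isClosed_iInter fun t => isClosed_iInter fun _ =>
    isClosed_iInter fun _ => isClosed_iInter fun _ => isClosed_iInter fun _ => ?_
  exact isClosed_le (hev z) (((hev x).const_smul s).add ((hev y).const_smul t))


lemma isOpen_USet (d : ℕ) (j : Fin d) (b : Bool) (n m : ℕ) : IsOpen (USet d j b n m) := by
  rw [Metric.isOpen_iff]
  rintro f ⟨t, ht0, htn, hface⟩
  set β : ℝ := (1:ℝ)/(m+1) with hβ
  set face : Set (↥(Icc (0:Fin d → ℝ) 1)) := {x | (x : Fin d → ℝ) j = faceVal b} with hfacedef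
  have hfacecl : IsClosed face :=
    isClosed_eq ((continuous_apply j).comp continuous_subtype_val) continuous_const
  have hfc : IsCompact face := hfacecl.isCompact
  by_cases hne : face.Nonempty
  · set φ : ↥(Icc (0:Fin d → ℝ) 1) → ℝ := fun x => f.1 (upd x j (inn b t)) - f.1 x with hφ
    have hφc : Continuous φ := (f.1.continuous.comp (continuous_upd j _)).sub f.1.continuous
    obtain ⟨z, hz, hmax⟩ := hfc.exists_isMaxOn hne hφc.continuousOn
    set δ : ℝ := -((n:ℝ)+1) * t ^ β - φ z with hδdef
    have hδ : 0 < δ := sub_pos.2 (hface z hz)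
    refine ⟨δ/2, by positivity, ?_⟩
    intro g hg
    refine ⟨t, ht0, htn, fun x hx => ?_⟩
    have hdist : dist g.1 f.1 < δ/2 := by
      rw [← Subtype.dist_eq]; exact Metric.mem_ball.1 hg
    have hp1 : ‖g.1 (upd x j (inn b t)) - f.1 (upd x j (inn b t))‖ ≤ dist g.1 f.1 := by
      rw [← dist_eq_norm]; exact ContinuousMap.dist_apply_le_dist _
    have hp2 : ‖g.1 x - f.1 x‖ ≤ dist g.1 f.1 := by
      rw [← dist_eq_norm]; exact ContinuousMap.dist_apply_le_dist _
    have hmx : φ x ≤ φ z := hmax hx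
    have e1 := (abs_le.1 (by simpa [Real.norm_eq_abs] using hp1)).2
    have e2 := (abs_le.1 (by simpa [Real.norm_eq_abs] using hp2)).1
    have hφx : φ x = f.1 (upd x j (inn b t)) - f.1 x := rfl
    have hφz' : φ z ≤ -((n:ℝ)+1) * t ^ β - δ := by rw [hδdef]; ring_nf; exact le_refl _
    nlinarith [hmx, e1, e2, hdist]
  · refine ⟨1, one_pos, fun g _ => ⟨t, ht0, htn, fun x hx => ?_⟩⟩
    exact absurd ⟨x, hx⟩ hne

set_option maxHeartbeats 1000000 in
lemma dense_USet (d : ℕ) (j : Fin d) (b : Bool) (n m : ℕ) : Dense (USet d j b n m) := by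
  rw [Metric.dense_iff]
  intro f r hr
  set p : ℝ := (1:ℝ)/(m+2) with hp
  set β : ℝ := (1:ℝ)/(m+1) with hβ
  have hp0 : 0 < p := by rw [hp]; positivity
  have hp1 : p < 1 := by
    rw [hp, div_lt_one (by positivity)]
    have : (0:ℝ) ≤ (m:ℝ) := Nat.cast_nonneg m
    linarith
  have hpβ : p < β := by
    rw [hp, hβ]
    apply div_lt_div_of_pos_left one_pos (by positivity)
    norm_num
  have hβ1 : β ≤ 1 := by
    rw [hβ, div_le_one (by positivity)]
    norm_num
  set ε : ℝ := r/2 with hε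
  have hε0 : 0 < ε := by rw [hε]; positivity
  set w : ℝ → ℝ := fun u => -(inn b u) ^ p with hw
  have hwcont : Continuous w := by
    have h1 : Continuous fun s : ℝ => s ^ p :=
      continuous_iff_continuousAt.2 fun s => Real.continuousAt_rpow_const s p (Or.inr hp0.le)
    have h2 : Continuous fun u : ℝ => inn b u := by
      cases b
      · simpa [inn] using continuous_id'
      · exact (continuous_const.sub continuous_id' : Continuous fun u : ℝ => 1 - u)
    exact (h1.comp h2).neg
  have hvconv : ConvexOn ℝ (Ici (0:ℝ)) fun s : ℝ => -(s ^ p) :=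
    ((Real.strictConcaveOn_rpow hp0 hp1).concaveOn).neg
  have hwkey : ∀ u ∈ Icc (0:ℝ) 1, ∀ v ∈ Icc (0:ℝ) 1, ∀ a c : ℝ, 0 ≤ a → 0 ≤ c → a + c = 1 →
      w (a * u + c * v) ≤ a * w u + c * w v := by
    intro u hu v hv a c ha hc hac
    have hu' : inn b u ∈ Ici (0:ℝ) := (inn_mem hu).1
    have hv' : inn b v ∈ Ici (0:ℝ) := (inn_mem hv).1
    have hlin : inn b (a * u + c * v) = a * inn b u + c * inn b v := by
      cases b
      · simp [inn]
      · simp only [inn, if_pos]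
        ring_nf
        linarith
    have hkey := hvconv.2 hu' hv' ha hc hac
    simp only [smul_eq_mul] at hkey
    show -(inn b (a * u + c * v)) ^ p ≤ a * (-(inn b u) ^ p) + c * (-(inn b v) ^ p)
    rw [hlin]
    simpa using hkey
  set g0 : C(Set.Icc (0 : Fin d → ℝ) 1, ℝ) :=
    ⟨fun x => f.1 x + ε * w ((x : Fin d → ℝ) j),
      f.1.continuous.add (continuous_const.mul
        (hwcont.comp ((continuous_apply j).comp continuous_subtype_val)))⟩
    with hg0
  have hg0apply : ∀ x, g0 x = f.1 x + ε * w ((x : Fin d → ℝ) j) := fun x => rfl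
  have hg0conv : IsConvexMapOnCube g0 := by
    intro x y z s t hs ht hst hz
    have hf := f.2 x y z s t hs ht hst hz
    have hzj : (z : Fin d → ℝ) j = s * (x : Fin d → ℝ) j + t * (y : Fin d → ℝ) j := by
      rw [hz]; simp
    have hwz := hwkey _ ⟨x.2.1 j, x.2.2 j⟩ _ ⟨y.2.1 j, y.2.2 j⟩ s t hs ht hst
    rw [hg0apply, hg0apply, hg0apply, hzj]
    nlinarith [hwz, hε0.le, hf]
  set g : CCSpace d := ⟨g0, hg0conv⟩ with hg
  have hwbd : ∀ u ∈ Icc (0:ℝ) 1, |w u| ≤ 1 := by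
    intro u hu
    show |(-(inn b u) ^ p)| ≤ 1
    rw [abs_neg, abs_of_nonneg (Real.rpow_nonneg (inn_mem hu).1 p)]
    exact Real.rpow_le_one (inn_mem hu).1 (inn_mem hu).2 hp0.le
  have hdist : dist g f < r := by
    rw [Subtype.dist_eq]
    have hd2 : dist g0 f.1 ≤ r/2 := by
      rw [ContinuousMap.dist_le (by positivity)]
      intro x
      rw [dist_eq_norm]
      have : g0 x - f.1 x = ε * w ((x : Fin d → ℝ) j) := by rw [hg0apply]; ring
      rw [this, Real.norm_eq_abs, abs_mul, abs_of_nonneg hε0.le]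
      calc ε * |w ((x : Fin d → ℝ) j)| ≤ ε * 1 :=
            mul_le_mul_of_nonneg_left (hwbd _ ⟨x.2.1 j, x.2.2 j⟩) hε0.le
        _ = r/2 := by rw [hε]; ring
    linarith
  set A : ℝ := 2 * ‖f.1‖ + 1 with hA
  have hA0 : 0 < A := by rw [hA]; positivity
  have hq1 : (0:ℝ) < β - p := by linarith
  have hq2 : (0:ℝ) < 1 - p := by linarith
  have htend : Tendsto (fun t : ℝ => ((n:ℝ)+1) * t ^ (β - p) + A * t ^ (1 - p))
      (nhdsWithin 0 (Ioi 0)) (nhds 0) := by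
    have l1 : Tendsto (fun t : ℝ => t ^ (β - p)) (nhds (0:ℝ)) (nhds 0) := by
      have hc := (Real.continuousAt_rpow_const 0 (β - p) (Or.inr hq1.le)).tendsto
      simpa [Real.zero_rpow hq1.ne'] using hc
    have l2 : Tendsto (fun t : ℝ => t ^ (1 - p)) (nhds (0:ℝ)) (nhds 0) := by
      have hc := (Real.continuousAt_rpow_const 0 (1 - p) (Or.inr hq2.le)).tendsto
      simpa [Real.zero_rpow hq2.ne'] using hc
    have hsum := ((l1.const_mul ((n:ℝ)+1)).add (l2.const_mul A)).mono_left
      (nhdsWithin_le_nhds (s := Ioi (0:ℝ)))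
    simpa using hsum
  have hev1 : ∀ᶠ t in nhdsWithin (0:ℝ) (Ioi 0),
      ((n:ℝ)+1) * t ^ (β - p) + A * t ^ (1 - p) < ε :=
    htend.eventually (eventually_lt_nhds hε0)
  have hev2 : Ioo (0:ℝ) (min 1 (1/(n+1))) ∈ nhdsWithin (0:ℝ) (Ioi 0) := by
    apply Ioo_mem_nhdsGT_of_mem
    refine ⟨le_refl _, ?_⟩
    simp only [lt_min_iff]
    constructor <;> positivity
  obtain ⟨t, ht1, ht2⟩ := (hev1.and (eventually_of_mem hev2 (fun t ht => ht))).exists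
  obtain ⟨ht0, htlt⟩ := ht2
  have ht01 : t ≤ 1 := le_of_lt (lt_of_lt_of_le htlt (min_le_left _ _))
  have htn : t < 1/(n+1) := lt_of_lt_of_le htlt (min_le_right _ _)
  -- multiply by t^p
  have htp : (0:ℝ) < t ^ p := Real.rpow_pos_of_pos ht0 p
  have hmain : ((n:ℝ)+1) * t ^ β + A * t < ε * t ^ p := by
    have hlt := mul_lt_mul_of_pos_right ht1 htp
    have e1 : t ^ (β - p) * t ^ p = t ^ β := by
      rw [← Real.rpow_add ht0]; norm_num
    have e2 : t ^ (1 - p) * t ^ p = t := by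
      rw [← Real.rpow_add ht0]
      have h12 : (1 - p) + p = 1 := by ring
      rw [h12, Real.rpow_one]
    have e3 : (((n:ℝ)+1) * t ^ (β - p) + A * t ^ (1 - p)) * t ^ p
        = ((n:ℝ)+1) * t ^ β + A * t := by
      rw [add_mul, mul_assoc, mul_assoc, e1, e2]
    rw [← e3]
    exact hlt
  refine ⟨g, Metric.mem_ball.2 hdist, t, ht0, htn, fun x hx => ?_⟩
  -- evaluate g0 at the two points
  have hupdj : ((upd x j (inn b t)) : Fin d → ℝ) j = inn b t := by
    rw [upd_val x j (inn_mem ⟨ht0.le, ht01⟩)]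
    simp
  have hwinn : w (inn b t) = -(t ^ p) := by
    show -(inn b (inn b t)) ^ p = -(t ^ p)
    cases b <;> simp [inn]
  have hwface : w (faceVal b) = 0 := by
    show -(inn b (faceVal b)) ^ p = 0
    cases b <;> simp [inn, faceVal, Real.zero_rpow hp0.ne']
  -- chord bound for f
  have hchord := chord f.2 hx ht0.le ht01 one_pos le_rfl
  have hbd1 : f.1 (upd x j (inn b 1)) - f.1 x ≤ A := by
    have n1 := ContinuousMap.norm_coe_le_norm f.1 (upd x j (inn b 1))
    have n2 := ContinuousMap.norm_coe_le_norm f.1 x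
    rw [Real.norm_eq_abs] at n1 n2
    rw [hA]
    have := abs_le.1 n1
    have := abs_le.1 n2
    nlinarith [abs_le.1 n1, abs_le.1 n2]
  have hfbd : f.1 (upd x j (inn b t)) - f.1 x ≤ t * A := by
    have h2 : (t/1) * (f.1 (upd x j (inn b 1)) - f.1 x) ≤ t * A := by
      rw [div_one]
      exact mul_le_mul_of_nonneg_left hbd1 ht0.le
    exact hchord.trans h2
  rw [hg0apply, hg0apply, hupdj, hx, hwinn, hwface]
  nlinarith [hmain, hfbd]

lemma poly_restrict {d : ℕ} (P : MvPolynomial (Fin d) ℝ) (j : Fin d) (σ : ℝ) :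
    ∃ Q : Polynomial ℝ, ∀ t : ℝ,
      MvPolynomial.eval (fun i => if i = j then σ * t else 0) P = Q.eval t := by
  refine ⟨MvPolynomial.eval₂ Polynomial.C
    (fun i => if i = j then Polynomial.C σ * Polynomial.X else 0) P, fun t => ?_⟩
  have h := MvPolynomial.eval₂_comp_left (Polynomial.evalRingHom t) Polynomial.C
    (fun i => if i = j then Polynomial.C σ * Polynomial.X else 0) P
  have h1 : (Polynomial.evalRingHom t).comp Polynomial.C = RingHom.id ℝ := by
    ext a; simp
  have h2 : (Polynomial.evalRingHom t) ∘
      (fun i => if i = j then Polynomial.C σ * Polynomial.X else 0)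
      = fun i : Fin d => if i = j then σ * t else 0 := by
    funext i
    by_cases hij : i = j <;> simp [hij]
  rw [h1, h2] at h
  have h3 : (MvPolynomial.eval fun i : Fin d => if i = j then σ * t else 0) P
      = MvPolynomial.eval₂ (RingHom.id ℝ) (fun i : Fin d => if i = j then σ * t else 0) P := rfl
  rw [h3, ← h]
  rfl

lemma poly_lip (Q : Polynomial ℝ) : ∃ L : ℝ, 0 ≤ L ∧
    ∀ t ∈ Icc (0:ℝ) 1, |Q.eval t - Q.eval 0| ≤ L * t := by
  have hdvd : Polynomial.X ∣ (Q - Polynomial.C (Q.eval 0)) := by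
    rw [Polynomial.X_dvd_iff]
    simp [Polynomial.coeff_zero_eq_eval_zero]
  obtain ⟨R, hR⟩ := hdvd
  have hcont : ContinuousOn (fun t : ℝ => |R.eval t|) (Icc 0 1) :=
    (R.continuous_aeval.abs.continuousOn)
  obtain ⟨z, hz, hmax⟩ := (isCompact_Icc (a := (0:ℝ)) (b := 1)).exists_isMaxOn
    ⟨0, by norm_num⟩ hcont
  refine ⟨|R.eval z|, abs_nonneg _, fun t ht => ?_⟩
  have key : Q.eval t - Q.eval 0 = t * R.eval t := by
    have := congrArg (Polynomial.eval t) hR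
    simpa using this
  rw [key, abs_mul, abs_of_nonneg ht.1, mul_comm]
  exact mul_le_mul_of_nonneg_right (hmax ht) ht.1

def GSet (d : ℕ) : Set (CCSpace d) :=
  ⋂ (q : Fin d × Bool × ℕ × ℕ), USet d q.1 q.2.1 q.2.2.1 q.2.2.2

lemma drop_of_mem {d : ℕ} {f : CCSpace d} (hf : f ∈ GSet d) (j : Fin d) (b : Bool) (n m : ℕ) :
    ∃ t : ℝ, 0 < t ∧ t < 1/(n+1) ∧ ∀ x : ↥(Icc (0:Fin d → ℝ) 1), (x : Fin d → ℝ) j = faceVal b →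
      f.1 (upd x j (inn b t)) - f.1 x < -((n:ℝ)+1) * t ^ ((1:ℝ)/(m+1)) :=
  mem_iInter.1 hf ⟨j, b, n, m⟩

lemma one_div_nat_le_one (n : ℕ) : 1/((n:ℝ)+1) ≤ 1 := by
  rw [div_le_one (by positivity)]
  have : (0:ℝ) ≤ (n:ℝ) := Nat.cast_nonneg n
  linarith

lemma slope_small {d : ℕ} {f : CCSpace d} (hf : f ∈ GSet d) {j : Fin d} {b : Bool}
    {x : ↥(Icc (0:Fin d → ℝ) 1)} (hx : (x : Fin d → ℝ) j = faceVal b) (n : ℕ) :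
    ∃ t0 : ℝ, 0 < t0 ∧ t0 < 1/(n+1) ∧ ∀ t, 0 < t → t ≤ t0 →
      f.1 (upd x j (inn b t)) - f.1 x ≤ -((n:ℝ)+1) * t := by
  obtain ⟨t0, h0, h1, hdrop⟩ := drop_of_mem hf j b n 0
  have ht01 : t0 ≤ 1 := le_of_lt (h1.trans_le (one_div_nat_le_one n))
  refine ⟨t0, h0, h1, fun t ht htt0 => ?_⟩
  have hc := chord f.2 hx ht.le htt0 h0 ht01
  have hd := hdrop x hx
  have hexp : ((1:ℝ)/((0:ℕ)+1)) = 1 := by norm_num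
  rw [hexp, Real.rpow_one] at hd
  have hfrac : 0 ≤ t / t0 := div_nonneg ht.le h0.le
  have step : (t/t0) * (f.1 (upd x j (inn b t0)) - f.1 x) ≤ (t/t0) * (-((n:ℝ)+1) * t0) :=
    mul_le_mul_of_nonneg_left hd.le hfrac
  have heq : (t/t0) * (-((n:ℝ)+1) * t0) = -((n:ℝ)+1) * t := by
    field_simp
  linarith [hc, step, heq.le, heq.ge]

lemma tendsto_false {d : ℕ} {f : CCSpace d} (hf : f ∈ GSet d) (F : (Fin d → ℝ) → ℝ)
    (hF : ∀ z : Set.Icc (0 : Fin d → ℝ) 1, F z = f.1 z) (j : Fin d)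
    (x : Fin d → ℝ) (hxK : x ∈ Set.Icc (0:Fin d → ℝ) 1) (hx0 : x j = 0) :
    Tendsto (fun t => (F (Function.update x j t) - F x) / (t - x j))
      (nhdsWithin (x j) (Ioi (x j))) atBot := by
  rw [hx0]
  rw [tendsto_atBot]
  intro M
  obtain ⟨n, hn⟩ := exists_nat_gt (-M)
  set X : ↥(Icc (0:Fin d → ℝ) 1) := ⟨x, hxK⟩ with hX
  have hxf : (X : Fin d → ℝ) j = faceVal false := by simpa [faceVal] using hx0
  obtain ⟨t0, ht00, ht0n, hslope⟩ := slope_small hf hxf n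
  have ht01 : t0 ≤ 1 := le_of_lt (ht0n.trans_le (one_div_nat_le_one n))
  filter_upwards [Ioc_mem_nhdsGT_of_mem (Set.left_mem_Ico.2 ht00)] with t ht
  have ht1 : t ≤ 1 := ht.2.trans ht01
  have hinn : inn false t = t := by simp [inn]
  have hmem : inn false t ∈ Icc (0:ℝ) 1 := by
    rw [hinn]; exact ⟨ht.1.le, ht1⟩
  have hFt : F (Function.update x j t) = f.1 (upd X j (inn false t)) := by
    rw [← hF (upd X j (inn false t))]
    congr 1
    rw [upd_val X j hmem]
    simp [inn]
    rfl
  have hFx : F x = f.1 X := hF X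
  have hsl := hslope t ht.1 ht.2
  rw [hFt, hFx, sub_zero, div_le_iff₀ ht.1]
  nlinarith [hn, ht.1]

lemma tendsto_true {d : ℕ} {f : CCSpace d} (hf : f ∈ GSet d) (F : (Fin d → ℝ) → ℝ)
    (hF : ∀ z : Set.Icc (0 : Fin d → ℝ) 1, F z = f.1 z) (j : Fin d)
    (x : Fin d → ℝ) (hxK : x ∈ Set.Icc (0:Fin d → ℝ) 1) (hx1 : x j = 1) :
    Tendsto (fun t => (F (Function.update x j t) - F x) / (t - x j))
      (nhdsWithin (x j) (Iio (x j))) atTop := by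
  rw [hx1]
  rw [tendsto_atTop]
  intro M
  obtain ⟨n, hn⟩ := exists_nat_gt M
  set X : ↥(Icc (0:Fin d → ℝ) 1) := ⟨x, hxK⟩ with hX
  have hxf : (X : Fin d → ℝ) j = faceVal true := by simpa [faceVal] using hx1
  obtain ⟨t0, ht00, ht0n, hslope⟩ := slope_small hf hxf n
  have ht01 : t0 ≤ 1 := le_of_lt (ht0n.trans_le (one_div_nat_le_one n))
  filter_upwards [Ioo_mem_nhdsLT_of_mem
    (show (1:ℝ) ∈ Ioc (1 - t0) 1 from ⟨by linarith, le_rfl⟩)] with u hu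
  have hu0 : 0 ≤ u := by
    have : 0 ≤ 1 - t0 := by linarith
    linarith [hu.1]
  have ht : 0 < 1 - u := by linarith [hu.2]
  have htt0 : 1 - u ≤ t0 := by linarith [hu.1]
  have hinn : inn true (1 - u) = u := by simp [inn]
  have hmem : inn true (1 - u) ∈ Icc (0:ℝ) 1 := by
    rw [hinn]; exact ⟨hu0, hu.2.le⟩
  have hFt : F (Function.update x j u) = f.1 (upd X j (inn true (1 - u))) := by
    rw [← hF (upd X j (inn true (1 - u)))]
    congr 1
    rw [upd_val X j hmem]
    simp [inn]
    rfl
  have hFx : F x = f.1 X := hF X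
  have hsl := hslope (1 - u) ht htt0
  rw [hFt, hFx]
  have hneg : u - 1 < 0 := by linarith
  rw [le_div_iff_of_neg hneg]
  nlinarith [hn, ht]

lemma holder_eq_zero {d : ℕ} {f : CCSpace d} (hf : f ∈ GSet d) (F : (Fin d → ℝ) → ℝ)
    (hF : ∀ z : Set.Icc (0 : Fin d → ℝ) 1, F z = f.1 z) (j : Fin d) (b : Bool)
    (x : Fin d → ℝ) (hxK : x ∈ Set.Icc (0:Fin d → ℝ) 1) (hxj : x j = faceVal b) :
    mHolderExpOn F (Icc (0:Fin d → ℝ) 1) x = 0 := by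
  set X : ↥(Icc (0:Fin d → ℝ) 1) := ⟨x, hxK⟩ with hX
  rw [mHolderExpOn]
  refine le_antisymm ?_ (zero_le ..)
  refine iSup_le fun h => iSup_le fun hcond => ?_
  rcases eq_or_ne h 0 with rfl | h0
  · simp
  exfalso
  have hh : (0:ℝ) < (h:ℝ) := by
    have := pos_iff_ne_zero.2 h0
    exact_mod_cast this
  obtain ⟨P, hdeg, C, hC, hev⟩ := hcond
  set σ : ℝ := if b then -1 else 1 with hσ
  obtain ⟨Q, hQ⟩ := poly_restrict P j σ
  obtain ⟨L, hL0, hLip⟩ := poly_lip Q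
  obtain ⟨δ, hδ, hsub⟩ := Metric.mem_nhdsWithin_iff.1 (Filter.eventually_iff.1 hev)
  -- value at x itself
  have hx_in : x ∈ Metric.ball x δ ∩ Icc 0 1 := ⟨Metric.mem_ball_self hδ, hxK⟩
  have hbx := hsub hx_in
  simp only [mem_setOf_eq] at hbx
  have hzero : (fun i => x i - x i) = (fun i : Fin d => if i = j then σ * 0 else 0) := by
    funext i; simp
  have hQ0 : MvPolynomial.eval (fun i => x i - x i) P = Q.eval 0 := by rw [hzero, hQ 0]
  have hFx : F x = Q.eval 0 := by
    have hn0 : ‖x - x‖ ^ (h:ℝ) = 0 := by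
      rw [sub_self, norm_zero, Real.zero_rpow hh.ne']
    rw [hQ0] at hbx
    rw [hn0, mul_zero] at hbx
    have := abs_nonpos_iff.1 (le_of_le_of_eq hbx rfl)
    linarith [abs_nonneg (F x - Q.eval 0), this, sub_eq_zero.1 this]
  -- choose exponent β
  have hmin : (0:ℝ) < min (h:ℝ) 1 := lt_min hh one_pos
  obtain ⟨mm, hmm⟩ := exists_nat_gt (1 / min (h:ℝ) 1)
  set β : ℝ := 1/((mm:ℝ)+1) with hβ
  have hβpos : 0 < β := by rw [hβ]; positivity
  have hβmin : β < min (h:ℝ) 1 := by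
    have hmm1 : 1 / min (h:ℝ) 1 < (mm:ℝ) + 1 := by
      have : (mm:ℝ) < (mm:ℝ) + 1 := by linarith
      exact hmm.trans this
    have h2 : 1 < ((mm:ℝ)+1) * min (h:ℝ) 1 := (div_lt_iff₀ hmin).1 hmm1
    rw [hβ, div_lt_iff₀ (by positivity : (0:ℝ) < (mm:ℝ)+1)]
    linarith [mul_comm ((mm:ℝ)+1) (min (h:ℝ) 1), h2]
  have hβh : β ≤ (h:ℝ) := le_of_lt (hβmin.trans_le (min_le_left _ _))
  have hβ1 : β ≤ 1 := le_of_lt (hβmin.trans_le (min_le_right _ _))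
  -- choose n
  obtain ⟨nn, hnn⟩ := exists_nat_gt (max (C + L) (1/δ))
  obtain ⟨t0, ht00, ht0n, hdropall⟩ := drop_of_mem hf j b nn mm
  have hd := hdropall X (by simpa using hxj)
  have ht01 : t0 ≤ 1 := le_of_lt (ht0n.trans_le (one_div_nat_le_one nn))
  have ht0δ : t0 < δ := by
    have h1 : 1/δ < (nn:ℝ)+1 := by
      have := (max_le_iff.1 hnn.le).2
      linarith
    have h2 : 1/((nn:ℝ)+1) < δ := by
      rw [div_lt_iff₀ (by positivity)]
      have := (div_lt_iff₀ hδ).1 h1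
      linarith [this]
    linarith [ht0n]
  set y0 : ↥(Icc (0:Fin d → ℝ) 1) := upd X j (inn b t0) with hy0
  have hmem : inn b t0 ∈ Icc (0:ℝ) 1 := inn_mem ⟨ht00.le, ht01⟩
  have hy0v : (y0 : Fin d → ℝ) = Function.update x j (inn b t0) := upd_val X j hmem
  have hdiffi : ∀ i, (y0 : Fin d → ℝ) i - x i = if i = j then σ * t0 else 0 := by
    intro i
    rw [hy0v]
    by_cases hij : i = j
    · subst hij
      rw [Function.update_self, if_pos rfl, hxj]
      cases b <;> simp [inn, faceVal, hσ] <;> ring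
    · rw [Function.update_of_ne hij, if_neg hij, sub_self]
  have hnorm : ‖(y0 : Fin d → ℝ) - x‖ ≤ t0 := by
    rw [pi_norm_le_iff_of_nonneg ht00.le]
    intro i
    rw [Pi.sub_apply, Real.norm_eq_abs, hdiffi i]
    by_cases hij : i = j
    · rw [if_pos hij, abs_mul]
      have : |σ| = 1 := by cases b <;> simp [hσ]
      rw [this, one_mul, abs_of_nonneg ht00.le]
    · rw [if_neg hij, abs_zero]; exact ht00.le
  have hy0_in : (y0 : Fin d → ℝ) ∈ Metric.ball x δ ∩ Icc 0 1 := by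
    constructor
    · rw [Metric.mem_ball, dist_eq_norm]
      exact lt_of_le_of_lt hnorm ht0δ
    · exact y0.2
  have hb0 := hsub hy0_in
  simp only [mem_setOf_eq] at hb0
  have hQt0 : MvPolynomial.eval (fun i => (y0 : Fin d → ℝ) i - x i) P = Q.eval t0 := by
    rw [show (fun i => (y0 : Fin d → ℝ) i - x i) = (fun i : Fin d => if i = j then σ * t0 else 0)
      from funext hdiffi, hQ t0]
  rw [hQt0] at hb0
  have hFy : F (y0 : Fin d → ℝ) = f.1 y0 := hF y0
  have h1 : |f.1 y0 - Q.eval t0| ≤ C * t0 ^ (h:ℝ) := by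
    rw [← hFy]
    refine hb0.trans (mul_le_mul_of_nonneg_left ?_ hC.le)
    exact Real.rpow_le_rpow (norm_nonneg _) hnorm hh.le
  have h2 : |Q.eval t0 - Q.eval 0| ≤ L * t0 := hLip t0 ⟨ht00.le, ht01⟩
  have hfX : f.1 X = Q.eval 0 := by rw [← hFx]; exact (hF X).symm
  have e1 : t0 ^ (h:ℝ) ≤ t0 ^ β := Real.rpow_le_rpow_of_exponent_ge ht00 ht01 hβh
  have e2 : t0 ≤ t0 ^ β := by
    have := Real.rpow_le_rpow_of_exponent_ge ht00 ht01 hβ1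
    rwa [Real.rpow_one] at this
  have e3 : (0:ℝ) < t0 ^ β := Real.rpow_pos_of_pos ht00 β
  have k1 : C * t0 ^ (h:ℝ) ≤ C * t0 ^ β := mul_le_mul_of_nonneg_left e1 hC.le
  have k2 : L * t0 ≤ L * t0 ^ β := mul_le_mul_of_nonneg_left e2 hL0
  have ha1 := abs_le.1 h1
  have ha2 := abs_le.1 h2
  have hdβ : f.1 y0 - f.1 X < -((nn:ℝ)+1) * t0 ^ β := by
    have : ((1:ℝ)/((mm:ℕ)+1) : ℝ) = β := by rw [hβ]
    rw [← this]
    exact_mod_cast hd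
  have k3 : ((nn:ℝ)+1) * t0 ^ β < (C + L) * t0 ^ β := by
    rw [hfX] at hdβ
    nlinarith [ha1.1, ha2.1, hdβ, k1, k2]
  have k4 : ((nn:ℝ)+1) < C + L := lt_of_mul_lt_mul_right k3 e3.le
  have k5 : C + L < (nn:ℝ) := lt_of_le_of_lt (le_max_left _ _) hnn
  linarith

end CCAux

theorem generic_convex_infinite_boundary_derivatives (d : ℕ) :
    ∃ G : Set (CCSpace d), Dense G ∧ IsGδ G ∧
      ∀ f ∈ G, ∀ F : (Fin d → ℝ) → ℝ,
        (∀ x : Set.Icc (0 : Fin d → ℝ) 1, F x = f.1 x) →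
        ∀ j : Fin d, ∀ x ∈ Set.Icc (0 : Fin d → ℝ) 1,
          (x j = 0 →
            Filter.Tendsto (fun t => (F (Function.update x j t) - F x) / (t - x j))
              (nhdsWithin (x j) (Set.Ioi (x j))) Filter.atBot ∧
            mHolderExpOn F (Set.Icc (0 : Fin d → ℝ) 1) x = 0) ∧
          (x j = 1 →
            Filter.Tendsto (fun t => (F (Function.update x j t) - F x) / (t - x j))
              (nhdsWithin (x j) (Set.Iio (x j))) Filter.atTop ∧
            mHolderExpOn F (Set.Icc (0 : Fin d → ℝ) 1) x = 0) := by
  haveI : CompleteSpace (CCSpace d) := (CCAux.isClosed_convex d).completeSpace_coe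
  refine ⟨CCAux.GSet d, ?_, ?_, ?_⟩
  · exact dense_iInter_of_isOpen
      (fun q => CCAux.isOpen_USet d q.1 q.2.1 q.2.2.1 q.2.2.2)
      (fun q => CCAux.dense_USet d q.1 q.2.1 q.2.2.1 q.2.2.2)
  · exact IsGδ.iInter fun q => (CCAux.isOpen_USet d q.1 q.2.1 q.2.2.1 q.2.2.2).isGδ
  · intro f hf F hF j x hxK
    refine ⟨fun hx0 => ⟨?_, ?_⟩, fun hx1 => ⟨?_, ?_⟩⟩
    · exact CCAux.tendsto_false hf F hF j x hxK hx0
    · exact CCAux.holder_eq_zero hf F hF j false x hxK (by simpa [CCAux.faceVal] using hx0)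
    · exact CCAux.tendsto_true hf F hF j x hxK hx1
    · exact CCAux.holder_eq_zero hf F hF j true x hxK (by simpa [CCAux.faceVal] using hx1)
end

section
/- For every h ∈ [0,1] there exists a continuous convex function f : [0,1]^d → ℝ such that h_f(x) = h for every x on the face {x ∈ [0,1]^d : x₁ = 0}. (For example, in dimension d and h ∈ (0,1], f(x) = −x₁^h works after verification of convexity in x₁ and constancy in other variables; h_f = h on the face x₁ = 0.) -/
open Filter Set
open scoped ENNReal NNReal

open Polynomial



-- helper: segment tendsto
lemma face_tendsto {d : ℕ} (i0 : Fin d) {x : Fin d → ℝ}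
    (hx : x ∈ Set.Icc (0 : Fin d → ℝ) 1) (hx0 : x i0 = 0) :
    Tendsto (fun t : ℝ => Function.update x i0 t) (nhdsWithin 0 (Set.Ioi 0))
      (nhdsWithin x (Set.Icc (0 : Fin d → ℝ) 1)) := by
  rw [tendsto_nhdsWithin_iff]
  constructor
  · have hc : Continuous (fun t : ℝ => Function.update x i0 t) :=
      continuous_const.update i0 continuous_id
    have h0 : Function.update x i0 (0:ℝ) = x := by
      rw [← hx0]; exact Function.update_eq_self i0 x
    simpa [h0] using (hc.tendsto 0).mono_left nhdsWithin_le_nhds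
  · filter_upwards [Ioc_mem_nhdsGT_of_mem (show (0:ℝ) ∈ Set.Ico 0 1 from ⟨le_refl 0, zero_lt_one⟩)] with t ht
    constructor
    · intro j
      by_cases hj : j = i0
      · subst hj; simpa [Function.update_apply] using ht.1.le
      · simpa [Function.update_apply, hj] using hx.1 j
    · intro j
      by_cases hj : j = i0
      · subst hj; simpa [Function.update_apply] using ht.2
      · simpa [Function.update_apply, hj] using hx.2 j

lemma update_sub {d : ℕ} (i0 : Fin d) {x : Fin d → ℝ} (hx0 : x i0 = 0) (t : ℝ) :
    Function.update x i0 t - x = Pi.single i0 t := by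
  funext j
  by_cases hj : j = i0
  · subst hj; simp [Function.update_apply, hx0, Pi.single_apply]
  · simp [Function.update_apply, hj, Pi.single_apply]

lemma eval_single_poly {d : ℕ} (i0 : Fin d) (P : MvPolynomial (Fin d) ℝ) (t : ℝ) :
    Polynomial.eval t
        (MvPolynomial.eval₂ Polynomial.C (fun i => if i = i0 then Polynomial.X else 0) P)
      = MvPolynomial.eval (Pi.single i0 t) P := by
  have := MvPolynomial.eval₂_comp_left (Polynomial.evalRingHom t) Polynomial.C
      (fun i => if i = i0 then Polynomial.X else 0) P
  simp only [Polynomial.coe_evalRingHom] at this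
  rw [this]
  rw [MvPolynomial.eval]
  congr 1
  · ext r; simp
  · funext i
    by_cases hi : i = i0 <;> simp [hi, Pi.single_apply]

lemma poly_small {Q : Polynomial ℝ} (hQ : Tendsto (fun t => Q.eval t) (nhdsWithin 0 (Set.Ioi 0)) (nhds 0)) :
    ∃ K > 0, ∀ᶠ t in nhdsWithin 0 (Set.Ioi (0:ℝ)), |Q.eval t| ≤ K * t := by
  have h0 : Q.eval 0 = 0 := by
    have h1 : Tendsto (fun t => Q.eval t) (nhdsWithin 0 (Set.Ioi 0)) (nhds (Q.eval 0)) :=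
      (Q.continuous.tendsto 0).mono_left nhdsWithin_le_nhds
    exact tendsto_nhds_unique h1 hQ
  obtain ⟨R, hR⟩ : (X : Polynomial ℝ) ∣ Q := by
    have : (X : Polynomial ℝ) - Polynomial.C 0 ∣ Q := dvd_iff_isRoot.mpr h0
    simpa using this
  refine ⟨|R.eval 0| + 1, by positivity, ?_⟩
  have hRc : Tendsto (fun t => |R.eval t|) (nhds 0) (nhds |R.eval 0|) :=
    ((R.continuous.tendsto 0).abs)
  have hev : ∀ᶠ t in nhds (0:ℝ), |R.eval t| < |R.eval 0| + 1 :=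
    hRc.eventually (eventually_lt_nhds (by linarith))
  filter_upwards [hev.filter_mono nhdsWithin_le_nhds, self_mem_nhdsWithin] with t ht ht'
  have htpos : (0:ℝ) < t := ht'
  rw [hR]
  rw [Polynomial.eval_mul, Polynomial.eval_X, abs_mul, abs_of_pos htpos, mul_comm]
  exact mul_le_mul_of_nonneg_right ht.le htpos.le

lemma norm_single_pi {d : ℕ} (i0 : Fin d) (t : ℝ) : ‖(Pi.single i0 t : Fin d → ℝ)‖ = |t| := by
  rw [Pi.norm_single]; exact Real.norm_eq_abs t

lemma upper_contra {d : ℕ} (i0 : Fin d) (G : ℝ → ℝ)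
    (hG : Tendsto G (nhdsWithin 0 (Set.Ioi 0)) (nhds 0))
    {x : Fin d → ℝ} (hx : x ∈ Set.Icc (0 : Fin d → ℝ) 1) (hx0 : x i0 = 0)
    {h' : ℝ} (hh' : 0 < h')
    (P : MvPolynomial (Fin d) ℝ) {C : ℝ} (hC : 0 < C)
    (hb : ∀ᶠ y in nhdsWithin x (Set.Icc (0 : Fin d → ℝ) 1),
      |G (y i0) - MvPolynomial.eval (fun i => y i - x i) P| ≤ C * ‖y - x‖ ^ h') :
    ∃ K > 0, ∀ᶠ t in nhdsWithin 0 (Set.Ioi (0:ℝ)),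
      |G t| ≤ C * t ^ h' + K * t := by
  classical
  set Q : Polynomial ℝ :=
    MvPolynomial.eval₂ Polynomial.C (fun i => if i = i0 then Polynomial.X else 0) P with hQdef
  -- pull back the bound along the segment
  have hseg := (face_tendsto i0 hx hx0).eventually hb
  have hb' : ∀ᶠ t in nhdsWithin 0 (Set.Ioi (0:ℝ)),
      |G t - Q.eval t| ≤ C * t ^ h' := by
    filter_upwards [hseg, self_mem_nhdsWithin] with t ht htpos
    have h1 : Function.update x i0 t i0 = t := Function.update_self i0 t x
    have h2 : (fun i => Function.update x i0 t i - x i) = Pi.single i0 t := by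
      have := update_sub i0 hx0 t
      funext j; exact congrFun this j
    have h3 : ‖Function.update x i0 t - x‖ = t := by
      rw [update_sub i0 hx0 t, norm_single_pi]
      exact abs_of_pos htpos
    rw [h1, h2, h3] at ht
    rwa [← eval_single_poly i0 P t, ← hQdef] at ht
  -- Q.eval → 0
  have hrp : Tendsto (fun t : ℝ => C * t ^ h') (nhdsWithin 0 (Set.Ioi 0)) (nhds 0) := by
    have : Tendsto (fun t : ℝ => t ^ h') (nhdsWithin 0 (Set.Ioi 0)) (nhds 0) := by
      have hc : ContinuousAt (fun t : ℝ => t ^ h') 0 :=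
        Real.continuousAt_rpow_const 0 h' (Or.inr hh'.le)
      have := hc.tendsto.mono_left (nhdsWithin_le_nhds (s := Set.Ioi (0:ℝ)))
      simpa [Real.zero_rpow hh'.ne'] using this
    simpa using this.const_mul C
  have hQ0 : Tendsto (fun t => Q.eval t) (nhdsWithin 0 (Set.Ioi 0)) (nhds 0) := by
    apply squeeze_zero_norm' _ (by simpa using hG.norm.add hrp)
    filter_upwards [hb'] with t ht
    have : |Q.eval t| ≤ |G t| + C * t ^ h' := by
      have := abs_sub_abs_le_abs_sub (Q.eval t) (G t)
      have h4 : |Q.eval t - G t| ≤ C * t ^ h' := by rwa [abs_sub_comm]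
      linarith [abs_nonneg (G t)]
    simpa [Real.norm_eq_abs] using this
  obtain ⟨K, hK, hKev⟩ := poly_small hQ0
  refine ⟨K, hK, ?_⟩
  filter_upwards [hb', hKev] with t h1 h2
  calc |G t| = |(G t - Q.eval t) + Q.eval t| := by ring_nf
    _ ≤ |G t - Q.eval t| + |Q.eval t| := abs_add_le _ _
    _ ≤ C * t ^ h' + K * t := add_le_add h1 h2
lemma lower_le {d : ℕ} (f : (Fin d → ℝ) → ℝ) (s : Set (Fin d → ℝ)) (x : Fin d → ℝ)
    {h' : ℝ≥0} (hh' : 0 < (h' : ℝ)) {C : ℝ} (hC : 0 < C)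
    (hb : ∀ᶠ y in nhdsWithin x s, |f y| ≤ C * ‖y - x‖ ^ (h' : ℝ)) :
    (h' : ℝ≥0∞) ≤ mHolderExpOn f s x := by
  have hp : ∃ P : MvPolynomial (Fin d) ℝ, (P.totalDegree : ℝ) < (h' : ℝ) ∧
      ∃ C > (0:ℝ), ∀ᶠ y in nhdsWithin x s,
        |f y - MvPolynomial.eval (fun i => y i - x i) P| ≤ C * ‖y - x‖ ^ (h' : ℝ) := by
    refine ⟨0, by simpa using hh', C, hC, ?_⟩
    simpa using hb
  exact le_iSup₂ (f := fun (h : ℝ≥0) (_ : _) => (h : ℝ≥0∞)) h' hp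

lemma exp_le {d : ℕ} (f : (Fin d → ℝ) → ℝ) (s : Set (Fin d → ℝ)) (x : Fin d → ℝ)
    {b : ℝ}
    (H : ∀ h' : ℝ≥0, (∃ P : MvPolynomial (Fin d) ℝ, (P.totalDegree : ℝ) < (h' : ℝ) ∧
      ∃ C > (0:ℝ), ∀ᶠ y in nhdsWithin x s,
        |f y - MvPolynomial.eval (fun i => y i - x i) P| ≤ C * ‖y - x‖ ^ (h' : ℝ)) →
      (h' : ℝ) ≤ b) :
    mHolderExpOn f s x ≤ ENNReal.ofReal b := by
  refine iSup₂_le fun h' hp => ?_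
  have := H h' hp
  rw [← ENNReal.ofReal_coe_nnreal]
  exact ENNReal.ofReal_le_ofReal this
lemma rpow_tendsto_zero {p : ℝ} (hp : 0 < p) :
    Tendsto (fun t : ℝ => t ^ p) (nhdsWithin 0 (Set.Ioi 0)) (nhds 0) := by
  have hc : ContinuousAt (fun t : ℝ => t ^ p) 0 :=
    Real.continuousAt_rpow_const 0 p (Or.inr hp.le)
  have := hc.tendsto.mono_left (nhdsWithin_le_nhds (s := Set.Ioi (0:ℝ)))
  simpa [Real.zero_rpow hp.ne'] using this

lemma case_mid (d : ℕ) (hd : 0 < d) (h : ℝ) (h0 : 0 < h) (h1 : h < 1) :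
    ∃ f : (Fin d → ℝ) → ℝ,
      ContinuousOn f (Set.Icc (0 : Fin d → ℝ) 1) ∧
      ConvexOn ℝ (Set.Icc (0 : Fin d → ℝ) 1) f ∧
      ∀ x ∈ Set.Icc (0 : Fin d → ℝ) 1, x ⟨0, hd⟩ = 0 →
        mHolderExpOn f (Set.Icc (0 : Fin d → ℝ) 1) x = ENNReal.ofReal h := by
  set i0 : Fin d := ⟨0, hd⟩
  refine ⟨fun y => -((y i0) ^ h), ?_, ?_, ?_⟩
  · -- continuity
    have hc : Continuous fun t : ℝ => t ^ h := by
      rw [continuous_iff_continuousAt]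
      exact fun t => Real.continuousAt_rpow_const t h (Or.inr h0.le)
    exact ((hc.comp (continuous_apply i0)).neg).continuousOn
  · -- convexity
    have hcc : ConvexOn ℝ (Set.Ici (0:ℝ)) fun t : ℝ => -(t ^ h) := by
      have := (Real.concaveOn_rpow h0.le h1.le).neg
      simpa [Pi.neg_def] using this
    have hcomp := hcc.comp_linearMap (LinearMap.proj (R := ℝ) (φ := fun _ : Fin d => ℝ) i0)
    exact hcomp.subset (fun y hy => hy.1 i0) (convex_Icc _ _)
  · -- exponent
    intro x hx hx0
    refine le_antisymm ?_ ?_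
    · -- upper bound
      refine exp_le _ _ _ fun h' hp => ?_
      by_contra hlt
      push_neg at hlt
      obtain ⟨P, _, C, hC, hb⟩ := hp
      have hG : Tendsto (fun t : ℝ => -(t ^ h)) (nhdsWithin 0 (Set.Ioi 0)) (nhds 0) := by
        simpa using (rpow_tendsto_zero h0).neg
      obtain ⟨K, hK, hev⟩ := upper_contra i0 (fun t => -(t ^ h)) hG hx hx0
        (show (0:ℝ) < (h' : ℝ) by linarith) P hC hb
      have hlim : Tendsto (fun t : ℝ => C * t ^ ((h' : ℝ) - h) + K * t ^ (1 - h))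
          (nhdsWithin 0 (Set.Ioi 0)) (nhds 0) := by
        have l1 := (rpow_tendsto_zero (show (0:ℝ) < (h' : ℝ) - h by linarith)).const_mul C
        have l2 := (rpow_tendsto_zero (show (0:ℝ) < 1 - h by linarith)).const_mul K
        simpa using l1.add l2
      have hev2 : ∀ᶠ t in nhdsWithin 0 (Set.Ioi (0:ℝ)),
          C * t ^ ((h' : ℝ) - h) + K * t ^ (1 - h) < 1 :=
        hlim.eventually (eventually_lt_nhds one_pos)
      have hcontra : ∀ᶠ t in nhdsWithin 0 (Set.Ioi (0:ℝ)), False := by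
        filter_upwards [hev, hev2, self_mem_nhdsWithin] with t h1' h2' h3'
        have htpos : (0:ℝ) < t := h3'
        have hth : (0:ℝ) < t ^ h := Real.rpow_pos_of_pos htpos h
        have e1 : t ^ (h' : ℝ) = t ^ ((h' : ℝ) - h) * t ^ h := by
          rw [← Real.rpow_add htpos]; ring_nf
        have e2 : t = t ^ (1 - h) * t ^ h := by
          rw [← Real.rpow_add htpos]; simp
        have h1'' : t ^ h ≤ C * t ^ (h' : ℝ) + K * t := by
          have : |(-(t ^ h))| = t ^ h := by
            rw [abs_neg, abs_of_nonneg (Real.rpow_nonneg htpos.le h)]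
          rwa [this] at h1'
        have key : (C * t ^ ((h' : ℝ) - h) + K * t ^ (1 - h)) * t ^ h
            = C * t ^ (h' : ℝ) + K * t := by
          rw [add_mul, mul_assoc, mul_assoc, ← Real.rpow_add htpos, ← Real.rpow_add htpos,
            sub_add_cancel, sub_add_cancel, Real.rpow_one]
        nlinarith [h1'', h2', hth, key]
      exact hcontra.exists.elim fun _ hf => hf
    · -- lower bound
      have hco : ENNReal.ofReal h = ((h.toNNReal : ℝ≥0) : ℝ≥0∞) := rfl
      rw [hco]
      refine lower_le _ _ _ (by simpa [Real.coe_toNNReal h h0.le] using h0) one_pos ?_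
      filter_upwards [eventually_mem_nhdsWithin] with y hy
      have hy0 : 0 ≤ y i0 := hy.1 i0
      have habs : |(-((y i0) ^ h))| = (y i0) ^ h := by
        rw [abs_neg, abs_of_nonneg (Real.rpow_nonneg hy0 h)]
      rw [habs, Real.coe_toNNReal h h0.le, one_mul]
      have hle : y i0 ≤ ‖y - x‖ := by
        have h2' : |(y - x) i0| ≤ ‖y - x‖ := by
          simpa [Real.norm_eq_abs] using norm_le_pi_norm (y - x) i0
        have h3' : (y - x) i0 = y i0 := by simp [hx0]
        calc y i0 ≤ |y i0| := le_abs_self _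
          _ = |(y - x) i0| := by rw [h3']
          _ ≤ ‖y - x‖ := h2'
      exact Real.rpow_le_rpow hy0 hle h0.le
lemma apply_le_norm {d : ℕ} (i0 : Fin d) {x y : Fin d → ℝ} (hx0 : x i0 = 0) :
    y i0 ≤ ‖y - x‖ := by
  have h2' : |(y - x) i0| ≤ ‖y - x‖ := by
    simpa [Real.norm_eq_abs] using norm_le_pi_norm (y - x) i0
  have h3' : (y - x) i0 = y i0 := by simp [hx0]
  calc y i0 ≤ |y i0| := le_abs_self _
    _ = |(y - x) i0| := by rw [h3']
    _ ≤ ‖y - x‖ := h2'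

lemma case_one (d : ℕ) (hd : 0 < d) :
    ∃ f : (Fin d → ℝ) → ℝ,
      ContinuousOn f (Set.Icc (0 : Fin d → ℝ) 1) ∧
      ConvexOn ℝ (Set.Icc (0 : Fin d → ℝ) 1) f ∧
      ∀ x ∈ Set.Icc (0 : Fin d → ℝ) 1, x ⟨0, hd⟩ = 0 →
        mHolderExpOn f (Set.Icc (0 : Fin d → ℝ) 1) x = ENNReal.ofReal 1 := by
  set i0 : Fin d := ⟨0, hd⟩
  have hmlc : Continuous fun t : ℝ => t * Real.log t := by
    exact Real.continuous_mul_log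
  refine ⟨fun y => (y i0) * Real.log (y i0), ?_, ?_, ?_⟩
  · exact (hmlc.comp (continuous_apply i0)).continuousOn
  · have hcc : ConvexOn ℝ (Set.Ici (0:ℝ)) fun t : ℝ => t * Real.log t := by
      have := Real.concaveOn_negMulLog.neg
      simpa [Real.negMulLog_eq_neg, Pi.neg_def] using this
    have hcomp := hcc.comp_linearMap (LinearMap.proj (R := ℝ) (φ := fun _ : Fin d => ℝ) i0)
    exact hcomp.subset (fun y hy => hy.1 i0) (convex_Icc _ _)
  · intro x hx hx0
    refine le_antisymm ?_ ?_
    · -- upper bound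
      refine exp_le _ _ _ fun h' hp => ?_
      by_contra hlt
      push_neg at hlt
      obtain ⟨P, _, C, hC, hb⟩ := hp
      have hG : Tendsto (fun t : ℝ => t * Real.log t) (nhdsWithin 0 (Set.Ioi 0)) (nhds 0) := by
        have := tendsto_log_mul_rpow_nhdsGT_zero one_pos
        simp only [Real.rpow_one] at this
        simpa [mul_comm] using this
      obtain ⟨K, hK, hev⟩ := upper_contra i0 (fun t => t * Real.log t) hG hx hx0
        (show (0:ℝ) < (h' : ℝ) by linarith) P hC hb
      have hlog : ∀ᶠ t in nhdsWithin 0 (Set.Ioi (0:ℝ)), Real.log t < -(C + K) :=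
        Real.tendsto_log_nhdsGT_zero.eventually (eventually_lt_atBot _)
      have hcontra : ∀ᶠ t in nhdsWithin 0 (Set.Ioi (0:ℝ)), False := by
        filter_upwards [hev, hlog, Ioo_mem_nhdsGT_of_mem (Set.left_mem_Ico.mpr one_pos)]
          with t h1' h2' h3'
        obtain ⟨htpos, ht1⟩ := h3'
        have habs : |t * Real.log t| = t * (-Real.log t) := by
          rw [abs_mul, abs_of_pos htpos, abs_of_nonpos (Real.log_nonpos htpos.le ht1.le)]
        have hpow : t ^ (h' : ℝ) ≤ t := by
          calc t ^ (h' : ℝ) ≤ t ^ (1:ℝ) :=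
            Real.rpow_le_rpow_of_exponent_ge htpos ht1.le (by linarith)
          _ = t := Real.rpow_one t
        rw [habs] at h1'
        have h4 : t * (-Real.log t) ≤ (C + K) * t := by
          calc t * (-Real.log t) ≤ C * t ^ (h' : ℝ) + K * t := h1'
            _ ≤ C * t + K * t := by nlinarith
            _ = (C + K) * t := by ring
        have h5 : -Real.log t ≤ C + K := by
          have := (mul_le_mul_iff_right₀ htpos).mp (by linarith [h4] : t * (-Real.log t) ≤ t * (C + K))
          linarith
        linarith
      exact hcontra.exists.elim fun _ hf => hf
    · -- lower bound
      rw [ENNReal.ofReal_one]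
      refine le_of_forall_lt fun c hc => ?_
      obtain ⟨b, hcb, hb1⟩ := exists_between hc
      have hbT : b ≠ ⊤ := (hb1.trans ENNReal.one_lt_top).ne
      have hb0 : b ≠ 0 := (pos_of_gt hcb).ne'
      set h' : ℝ≥0 := b.toNNReal with hh'def
      have hcoe : (h' : ℝ≥0∞) = b := ENNReal.coe_toNNReal hbT
      have hpos : 0 < (h' : ℝ) := ENNReal.toReal_pos hb0 hbT
      have hlt1 : (h' : ℝ) < 1 := by
        have := (ENNReal.toReal_lt_toReal hbT ENNReal.one_ne_top).mpr hb1
        exact this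
      set ε : ℝ := 1 - (h' : ℝ) with hεdef
      have hε : 0 < ε := by rw [hεdef]; linarith
      have hle : (h' : ℝ≥0∞) ≤ mHolderExpOn (fun y => (y i0) * Real.log (y i0))
          (Set.Icc (0 : Fin d → ℝ) 1) x := by
        refine lower_le _ _ _ hpos (inv_pos.mpr hε) ?_
        filter_upwards [eventually_mem_nhdsWithin] with y hy
        have ht0 : 0 ≤ y i0 := hy.1 i0
        have ht1 : y i0 ≤ 1 := hy.2 i0
        have hrn : (0:ℝ) ≤ ‖y - x‖ ^ (h' : ℝ) := Real.rpow_nonneg (norm_nonneg _) _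
        rcases eq_or_lt_of_le ht0 with heq | htpos
        · rw [← heq]
          rw [zero_mul, abs_zero]
          positivity
        · have habs : |y i0 * Real.log (y i0)| = y i0 * (-Real.log (y i0)) := by
            rw [abs_mul, abs_of_pos htpos, abs_of_nonpos (Real.log_nonpos ht0 ht1)]
          rw [habs]
          have hlog : -Real.log (y i0) ≤ ((y i0)⁻¹) ^ ε / ε := by
            rw [← Real.log_inv]
            exact Real.log_le_rpow_div (inv_nonneg.mpr ht0) hε
          have step1 : y i0 * (-Real.log (y i0)) ≤ y i0 * (((y i0)⁻¹) ^ ε / ε) :=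
            mul_le_mul_of_nonneg_left hlog ht0
          have e1 : ((y i0)⁻¹) ^ ε = (y i0) ^ (-ε) := by
            rw [Real.inv_rpow ht0, ← Real.rpow_neg ht0]
          have e2 : y i0 * (y i0) ^ (-ε) = (y i0) ^ (h' : ℝ) := by
            calc y i0 * (y i0) ^ (-ε) = (y i0) ^ (1:ℝ) * (y i0) ^ (-ε) := by
                  rw [Real.rpow_one]
              _ = (y i0) ^ (1 + -ε) := (Real.rpow_add htpos 1 (-ε)).symm
              _ = (y i0) ^ (h' : ℝ) := by rw [hεdef]; ring_nf
          have step2 : y i0 * (((y i0)⁻¹) ^ ε / ε) = (y i0) ^ (h' : ℝ) * ε⁻¹ := by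
            rw [e1, ← mul_div_assoc, e2, div_eq_mul_inv]
          have step3 : (y i0) ^ (h' : ℝ) ≤ ‖y - x‖ ^ (h' : ℝ) :=
            Real.rpow_le_rpow ht0 (apply_le_norm i0 hx0) hpos.le
          calc y i0 * (-Real.log (y i0)) ≤ (y i0) ^ (h' : ℝ) * ε⁻¹ := by
                rw [← step2]; exact step1
            _ ≤ ‖y - x‖ ^ (h' : ℝ) * ε⁻¹ := mul_le_mul_of_nonneg_right step3 (inv_nonneg.mpr hε.le)
            _ = ε⁻¹ * ‖y - x‖ ^ (h' : ℝ) := mul_comm _ _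
      calc c < b := hcb
        _ = (h' : ℝ≥0∞) := hcoe.symm
        _ ≤ _ := hle
section CaseZero

noncomputable def Gz : ℝ → ℝ := fun t => (Real.log (t * Real.exp (-2)))⁻¹

lemma Gz_zero : Gz 0 = 0 := by simp [Gz]

lemma Gz_log {t : ℝ} (ht : 0 < t) : Real.log (t * Real.exp (-2)) = Real.log t - 2 := by
  rw [Real.log_mul ht.ne' (Real.exp_ne_zero _), Real.log_exp]
  ring

lemma Gz_log_neg {t : ℝ} (ht0 : 0 < t) (ht1 : t ≤ 1) :
    Real.log (t * Real.exp (-2)) ≤ -2 := by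
  rw [Gz_log ht0]
  have := Real.log_nonpos ht0.le ht1
  linarith

lemma Gz_tendsto : Tendsto Gz (nhdsWithin 0 (Set.Ioi 0)) (nhds 0) := by
  have htc : Tendsto (fun t : ℝ => t * Real.exp (-2)) (nhdsWithin 0 (Set.Ioi 0))
      (nhdsWithin 0 (Set.Ioi 0)) := by
    rw [tendsto_nhdsWithin_iff]
    constructor
    · have : Tendsto (fun t : ℝ => t * Real.exp (-2)) (nhds 0) (nhds (0 * Real.exp (-2))) :=
        (continuous_id.mul continuous_const).tendsto 0
      simpa using this.mono_left nhdsWithin_le_nhds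
    · filter_upwards [self_mem_nhdsWithin] with t ht
      exact mul_pos ht (Real.exp_pos _)
  have hlogbot : Tendsto (fun t : ℝ => Real.log (t * Real.exp (-2)))
      (nhdsWithin 0 (Set.Ioi 0)) atBot := Real.tendsto_log_nhdsGT_zero.comp htc
  have h1 : Tendsto (fun t : ℝ => -Real.log (t * Real.exp (-2)))
      (nhdsWithin 0 (Set.Ioi 0)) atTop := tendsto_neg_atBot_iff.mp (by simpa using hlogbot)
  have h2 := h1.inv_tendsto_atTop
  have h3 : Tendsto (fun t : ℝ => -((-Real.log (t * Real.exp (-2)))⁻¹))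
      (nhdsWithin 0 (Set.Ioi 0)) (nhds 0) := by simpa using h2.neg
  refine h3.congr fun t => ?_
  simp [Gz, inv_neg]

lemma Gz_continuousOn : ContinuousOn Gz (Set.Icc (0:ℝ) 1) := by
  intro t ht
  rcases eq_or_lt_of_le ht.1 with heq | htpos
  · -- t = 0
    subst heq
    have cwa1 : ContinuousWithinAt Gz (Set.Ioi 0) 0 := by
      unfold ContinuousWithinAt
      rw [Gz_zero]
      exact Gz_tendsto
    have cwa2 : ContinuousWithinAt Gz {0} 0 := continuousWithinAt_singleton
    refine (cwa1.union cwa2).mono fun u hu => ?_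
    rcases eq_or_lt_of_le hu.1 with h | h
    · exact Or.inr (by simp [← h])
    · exact Or.inl h
  · -- t > 0
    have hne : t * Real.exp (-2) ≠ 0 := (mul_pos htpos (Real.exp_pos _)).ne'
    have hlogne : Real.log (t * Real.exp (-2)) ≠ 0 := by
      have := Gz_log_neg htpos ht.2
      linarith
    have hca : ContinuousAt Gz t := by
      have hinner : ContinuousAt (fun s : ℝ => Real.log (s * Real.exp (-2))) t :=
        ContinuousAt.log ((continuous_id.mul continuous_const).continuousAt) (by simpa using hne)
      exact hinner.inv₀ hlogne
    exact hca.continuousWithinAt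

lemma Gz_hasDerivAt {t : ℝ} (ht0 : 0 < t) (ht1 : t ≤ 1) :
    HasDerivAt Gz (-(t⁻¹ / (Real.log (t * Real.exp (-2))) ^ 2)) t := by
  have hne : t * Real.exp (-2) ≠ 0 := (mul_pos ht0 (Real.exp_pos _)).ne'
  have hune : Real.log (t * Real.exp (-2)) ≠ 0 := by
    have := Gz_log_neg ht0 ht1; linarith
  have hmul : HasDerivAt (fun s : ℝ => s * Real.exp (-2)) (Real.exp (-2)) t :=
    hasDerivAt_mul_const _
  have hlogd : HasDerivAt (fun s : ℝ => Real.log (s * Real.exp (-2))) t⁻¹ t := by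
    have := (Real.hasDerivAt_log hne).comp t hmul
    refine this.congr_deriv ?_
    rw [mul_inv, mul_assoc, inv_mul_cancel₀ (Real.exp_ne_zero _), mul_one]
  have := hlogd.inv hune
  rw [neg_div] at this
  exact this

lemma Gz_convexOn : ConvexOn ℝ (Set.Icc (0:ℝ) 1) Gz := by
  set c : ℝ := Real.exp (-2) with hc
  refine convexOn_of_hasDerivWithinAt2_nonneg (f' := fun t => -(t⁻¹ / (Real.log (t * c)) ^ 2))
    (f'' := fun t => ((Real.log (t * c)) ^ 2 + 2 * Real.log (t * c)) /
      (t ^ 2 * (Real.log (t * c)) ^ 4))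
    (convex_Icc _ _) Gz_continuousOn ?_ ?_ ?_
  · intro t ht
    rw [interior_Icc] at ht
    exact (Gz_hasDerivAt ht.1 ht.2.le).hasDerivWithinAt
  · intro t ht
    rw [interior_Icc] at ht
    obtain ⟨ht0, ht1⟩ := ht
    have hne : t * c ≠ 0 := (mul_pos ht0 (Real.exp_pos _)).ne'
    have hune : Real.log (t * c) ≠ 0 := by
      have := Gz_log_neg ht0 ht1.le; rw [← hc] at this; linarith
    have hmul : HasDerivAt (fun s : ℝ => s * c) c t := hasDerivAt_mul_const _
    have hlogd : HasDerivAt (fun s : ℝ => Real.log (s * c)) t⁻¹ t := by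
      have := (Real.hasDerivAt_log hne).comp t hmul
      refine this.congr_deriv ?_
      rw [mul_inv, mul_assoc, inv_mul_cancel₀ (hc ▸ Real.exp_ne_zero _ : c ≠ 0), mul_one]
    have hnum : HasDerivAt (fun s : ℝ => s⁻¹) (-(t ^ 2)⁻¹) t := hasDerivAt_inv ht0.ne'
    have hden : HasDerivAt (fun s : ℝ => (Real.log (s * c)) ^ 2)
        ((2 : ℕ) * (Real.log (t * c)) ^ (2 - 1) * t⁻¹) t := hlogd.pow 2
    have hdiv := hnum.div hden (pow_ne_zero 2 hune)
    have hf'' := hdiv.neg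
    refine (HasDerivAt.hasDerivWithinAt ?_)
    refine hf''.congr_deriv ?_
    field_simp
    ring
  · intro t ht
    rw [interior_Icc] at ht
    obtain ⟨ht0, ht1⟩ := ht
    have hu : Real.log (t * c) ≤ -2 := by
      have := Gz_log_neg ht0 ht1.le; rw [← hc] at this; exact this
    apply div_nonneg
    · nlinarith
    · positivity

end CaseZero
lemma case_zero (d : ℕ) (hd : 0 < d) :
    ∃ f : (Fin d → ℝ) → ℝ,
      ContinuousOn f (Set.Icc (0 : Fin d → ℝ) 1) ∧
      ConvexOn ℝ (Set.Icc (0 : Fin d → ℝ) 1) f ∧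
      ∀ x ∈ Set.Icc (0 : Fin d → ℝ) 1, x ⟨0, hd⟩ = 0 →
        mHolderExpOn f (Set.Icc (0 : Fin d → ℝ) 1) x = ENNReal.ofReal 0 := by
  set i0 : Fin d := ⟨0, hd⟩
  refine ⟨fun y => Gz (y i0), ?_, ?_, ?_⟩
  · refine Gz_continuousOn.comp (continuous_apply i0).continuousOn fun y hy => ?_
    exact ⟨hy.1 i0, hy.2 i0⟩
  · have hcomp := Gz_convexOn.comp_linearMap (LinearMap.proj (R := ℝ) (φ := fun _ : Fin d => ℝ) i0)
    exact hcomp.subset (fun y hy => ⟨hy.1 i0, hy.2 i0⟩) (convex_Icc _ _)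
  · intro x hx hx0
    refine le_antisymm ?_ (by simp)
    refine exp_le (b := 0) _ _ _ fun h' hp => ?_
    by_contra hlt
    push_neg at hlt
    have hpos : (0:ℝ) < (h' : ℝ) := hlt
    obtain ⟨P, _, C, hC, hb⟩ := hp
    obtain ⟨K, hK, hev⟩ := upper_contra i0 Gz Gz_tendsto hx hx0 hpos P hC hb
    -- the product tends to zero
    have hR : Tendsto (fun t : ℝ => (C * t ^ (h' : ℝ) + K * t) * (2 - Real.log t))
        (nhdsWithin 0 (Set.Ioi 0)) (nhds 0) := by
      have p1 : Tendsto (fun t : ℝ => C * t ^ (h' : ℝ) * 2)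
          (nhdsWithin 0 (Set.Ioi 0)) (nhds 0) := by
        simpa using ((rpow_tendsto_zero hpos).const_mul C).mul_const 2
      have p2 : Tendsto (fun t : ℝ => C * (Real.log t * t ^ (h' : ℝ)))
          (nhdsWithin 0 (Set.Ioi 0)) (nhds 0) := by
        simpa using (tendsto_log_mul_rpow_nhdsGT_zero hpos).const_mul C
      have p3 : Tendsto (fun t : ℝ => K * t ^ (1:ℝ) * 2)
          (nhdsWithin 0 (Set.Ioi 0)) (nhds 0) := by
        simpa using ((rpow_tendsto_zero one_pos).const_mul K).mul_const 2
      have p4 : Tendsto (fun t : ℝ => K * (Real.log t * t ^ (1:ℝ)))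
          (nhdsWithin 0 (Set.Ioi 0)) (nhds 0) := by
        simpa using (tendsto_log_mul_rpow_nhdsGT_zero one_pos).const_mul K
      have hsum := ((p1.sub p2).add (p3.sub p4))
      simp only [add_zero, sub_zero, zero_add, sub_self] at hsum
      refine Tendsto.congr (fun t => ?_) (by simpa using hsum)
      ring
    have hev2 : ∀ᶠ t in nhdsWithin 0 (Set.Ioi (0:ℝ)),
        (C * t ^ (h' : ℝ) + K * t) * (2 - Real.log t) < 1 :=
      hR.eventually (eventually_lt_nhds one_pos)
    have hcontra : ∀ᶠ t in nhdsWithin 0 (Set.Ioi (0:ℝ)), False := by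
      filter_upwards [hev, hev2, Ioo_mem_nhdsGT_of_mem (Set.left_mem_Ico.mpr one_pos)]
        with t h1' h2' h3'
      obtain ⟨htpos, ht1⟩ := h3'
      have hlogle : Real.log t ≤ 0 := Real.log_nonpos htpos.le ht1.le
      have h2pos : (0:ℝ) < 2 - Real.log t := by linarith
      have habs : |Gz t| = (2 - Real.log t)⁻¹ := by
        have hgz : Gz t = (Real.log t - 2)⁻¹ := by
          rw [Gz, Gz_log htpos]
        rw [hgz, abs_inv, abs_of_neg (by linarith : Real.log t - 2 < 0)]
        congr 1
        ring
      rw [habs] at h1'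
      have hmul := mul_le_mul_of_nonneg_right h1' h2pos.le
      rw [inv_mul_cancel₀ h2pos.ne'] at hmul
      linarith
    exact hcontra.exists.elim fun _ hf => hf

theorem exists_convex_with_given_exponent_on_face
    (d : ℕ) (hd : 0 < d) (h : ℝ) (h0 : 0 ≤ h) (h1 : h ≤ 1) :
    ∃ f : (Fin d → ℝ) → ℝ,
      ContinuousOn f (Set.Icc (0 : Fin d → ℝ) 1) ∧
      ConvexOn ℝ (Set.Icc (0 : Fin d → ℝ) 1) f ∧
      ∀ x ∈ Set.Icc (0 : Fin d → ℝ) 1, x ⟨0, hd⟩ = 0 →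
        mHolderExpOn f (Set.Icc (0 : Fin d → ℝ) 1) x = ENNReal.ofReal h := by
  rcases h0.eq_or_lt with heq | hpos
  · rw [← heq]
    exact case_zero d hd
  · rcases h1.lt_or_eq with hlt | heq1
    · exact case_mid d hd h hpos hlt
    · rw [heq1]
      exact case_one d hd
end
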